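/- Let b ∈ ℕ, let L be a positive integer, let f : ℝ → ℝ be L-Lipschitz, and let u ∈ ℝ. Let I = [2^{−b}⌊2^b u⌋, 2^{−b}⌊2^b u⌋ + 2^{−b}) be the quantization cell of u. Then there exists an integer i* with |i*| ≤ L such that the Lebesgue measure of the set {x ∈ I : ⌊2^b f(x)⌋ = ⌊2^b f(u)⌋ + i*} is at least 2^{−b}/(2L+1). -/

import Mathlib

open MeasureTheory

/-- Measure-theoretic pigeonhole step for the Q-MAP pair regularizer: if `f` is
`L`-Lipschitz (`L` a positive integer), then inside the quantization cell `I` of `u`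
(a dyadic interval of width `2^{-b}`) there is some shift `i*` with `|i*| ≤ L` such that
the set of points of `I` whose image quantizes to cell `⌊2^b f(u)⌋ + i*` has Lebesgue
measure at least `2^{-b}/(2L+1)`. -/
theorem stmt_16 (b : ℕ) (L : ℕ) (hL : 0 < L) (f : ℝ → ℝ)
    (hf : LipschitzWith (L : NNReal) f) (u : ℝ) :
    ∃ istar : ℤ, |istar| ≤ (L : ℤ) ∧
      ENNReal.ofReal ((2 : ℝ) ^ (-(b : ℤ)) / (2 * L + 1)) ≤
        volume {x ∈ Set.Ico ((⌊(2 : ℝ) ^ b * u⌋ : ℝ) / 2 ^ b)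
            ((⌊(2 : ℝ) ^ b * u⌋ : ℝ) / 2 ^ b + (2 : ℝ) ^ (-(b : ℤ))) |
          ⌊(2 : ℝ) ^ b * f x⌋ = ⌊(2 : ℝ) ^ b * f u⌋ + istar} := by
  set r : ℝ := (2 : ℝ) ^ (-(b : ℤ)) with hr
  have h2b : (0 : ℝ) < (2 : ℝ) ^ b := by positivity
  have hrval : r = ((2 : ℝ) ^ b)⁻¹ := by
    rw [hr, zpow_neg, zpow_natCast]
  have hrpos : (0 : ℝ) < r := by rw [hrval]; positivity
  set c : ℝ := (⌊(2 : ℝ) ^ b * u⌋ : ℝ) / 2 ^ b with hc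
  set I : Set ℝ := Set.Ico c (c + r) with hI
  set S : ℤ → Set ℝ := fun i =>
    {x ∈ I | ⌊(2 : ℝ) ^ b * f x⌋ = ⌊(2 : ℝ) ^ b * f u⌋ + i} with hS
  -- u ∈ I
  have huI : u ∈ I := by
    constructor
    · rw [hc, div_le_iff₀ h2b]
      calc (⌊(2 : ℝ) ^ b * u⌋ : ℝ) ≤ (2 : ℝ) ^ b * u := Int.floor_le _
        _ = u * 2 ^ b := by ring
    · rw [hc, hrval]
      have := Int.lt_floor_add_one ((2 : ℝ) ^ b * u)
      rw [show (⌊(2:ℝ)^b*u⌋:ℝ)/2^b + ((2:ℝ)^b)⁻¹ = ((⌊(2:ℝ)^b*u⌋:ℝ)+1)/2^b by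
        field_simp]
      rw [lt_div_iff₀ h2b]
      linarith
  -- covering
  have hcover : I ⊆ ⋃ i ∈ Finset.Icc (-(L : ℤ)) (L : ℤ), S i := by
    intro x hx
    have hdx : |x - u| < r := by
      rcases hx with ⟨hx1, hx2⟩
      rcases huI with ⟨hu1, hu2⟩
      rw [abs_lt]; constructor <;> linarith
    have hdf : |f x - f u| ≤ (L : ℝ) * r := by
      have := hf.dist_le_mul x u
      rw [Real.dist_eq] at this
      calc |f x - f u| ≤ (L : ℝ) * |x - u| := by
            simpa [Real.dist_eq] using this
        _ ≤ (L : ℝ) * r := by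
            have : |x - u| ≤ r := le_of_lt hdx
            nlinarith [abs_nonneg (x - u), (Nat.cast_pos.mpr hL : (0:ℝ) < L)]
    have hkey : |(2 : ℝ) ^ b * f x - (2 : ℝ) ^ b * f u| ≤ (L : ℝ) := by
      rw [← mul_sub, abs_mul, abs_of_pos h2b]
      calc (2:ℝ)^b * |f x - f u| ≤ (2:ℝ)^b * ((L : ℝ) * r) := by
            nlinarith
        _ = (L : ℝ) := by rw [hrval]; field_simp
    set i : ℤ := ⌊(2 : ℝ) ^ b * f x⌋ - ⌊(2 : ℝ) ^ b * f u⌋ with hi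
    have habs : |i| ≤ (L : ℤ) := by
      rw [abs_le] at hkey ⊢
      constructor
      · have : (2 : ℝ) ^ b * f u ≤ (2 : ℝ) ^ b * f x + (L : ℤ) := by
          push_cast; linarith [hkey.1]
        have h1 : ⌊(2 : ℝ) ^ b * f u⌋ ≤ ⌊(2 : ℝ) ^ b * f x + (L : ℤ)⌋ :=
          Int.floor_le_floor this
        rw [Int.floor_add_intCast] at h1
        omega
      · have : (2 : ℝ) ^ b * f x ≤ (2 : ℝ) ^ b * f u + (L : ℤ) := by
          push_cast; linarith [hkey.2]
        have h1 : ⌊(2 : ℝ) ^ b * f x⌋ ≤ ⌊(2 : ℝ) ^ b * f u + (L : ℤ)⌋ :=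
          Int.floor_le_floor this
        rw [Int.floor_add_intCast] at h1
        omega
    exact Set.mem_iUnion₂.mpr ⟨i, Finset.mem_Icc.mpr (abs_le.mp habs), hx, by omega⟩
  -- measure of I
  have hvolI : volume I = ENNReal.ofReal r := by
    rw [hI, Real.volume_Ico]; congr 1; ring
  -- subadditivity
  have hsum : ENNReal.ofReal r ≤
      ∑ i ∈ Finset.Icc (-(L : ℤ)) (L : ℤ), volume (S i) := by
    calc ENNReal.ofReal r = volume I := hvolI.symm
      _ ≤ volume (⋃ i ∈ Finset.Icc (-(L : ℤ)) (L : ℤ), S i) :=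
          measure_mono hcover
      _ ≤ ∑ i ∈ Finset.Icc (-(L : ℤ)) (L : ℤ), volume (S i) :=
          measure_biUnion_finset_le _ _
  -- pigeonhole
  have hcard : (Finset.Icc (-(L : ℤ)) (L : ℤ)).card = 2 * L + 1 := by
    rw [Int.card_Icc]; omega
  have hden : (0 : ℝ) < 2 * (L : ℝ) + 1 := by positivity
  have hconst : ∑ _i ∈ Finset.Icc (-(L : ℤ)) (L : ℤ),
      ENNReal.ofReal (r / (2 * L + 1)) = ENNReal.ofReal r := by
    rw [Finset.sum_const, hcard, nsmul_eq_mul]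
    rw [← ENNReal.ofReal_natCast, ← ENNReal.ofReal_mul (by positivity)]
    congr 1
    push_cast
    field_simp
  set m : ENNReal := ENNReal.ofReal (r / (2 * L + 1)) with hm
  have hpig : ∃ i ∈ Finset.Icc (-(L : ℤ)) (L : ℤ), m ≤ volume (S i) := by
    by_contra h
    push_neg at h
    set s := Finset.Icc (-(L : ℤ)) (L : ℤ) with hs'
    have hmem0 : (0 : ℤ) ∈ s := Finset.mem_Icc.mpr ⟨by omega, by omega⟩
    have hsplit : ∑ i ∈ s, volume (S i)
        = volume (S 0) + ∑ i ∈ s.erase 0, volume (S i) :=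
      (Finset.add_sum_erase s _ hmem0).symm
    have hsplit' : (m + ∑ _i ∈ s.erase 0, m) = ENNReal.ofReal r := by
      rw [Finset.add_sum_erase s (fun _ => m) hmem0]; exact hconst
    have hrest : ∑ i ∈ s.erase 0, volume (S i) ≤ ∑ _i ∈ s.erase 0, m :=
      Finset.sum_le_sum fun i hi => le_of_lt (h i (Finset.mem_of_mem_erase hi))
    have hCtop : (∑ _i ∈ s.erase 0, m) ≠ ⊤ := by
      simp only [Finset.sum_const, nsmul_eq_mul, hm]
      exact ENNReal.mul_ne_top (ENNReal.natCast_ne_top _) ENNReal.ofReal_ne_top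
    have hchain : ENNReal.ofReal r < ENNReal.ofReal r := by
      calc ENNReal.ofReal r ≤ ∑ i ∈ s, volume (S i) := hsum
        _ = volume (S 0) + ∑ i ∈ s.erase 0, volume (S i) := hsplit
        _ ≤ volume (S 0) + ∑ _i ∈ s.erase 0, m := add_le_add_right hrest _
        _ < m + ∑ _i ∈ s.erase 0, m :=
            ENNReal.add_lt_add_right hCtop (h 0 hmem0)
        _ = ENNReal.ofReal r := hsplit'
    exact lt_irrefl _ hchain
  obtain ⟨i, hi, hle⟩ := hpig
  refine ⟨i, abs_le.mpr (Finset.mem_Icc.mp hi), ?_⟩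
  exact hle
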